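/- (Geometrically reducible plane curves have finitely many rational points.) Let k be a number field and let F be a polynomial in two variables over k (an element of MvPolynomial (Fin 2) k). Suppose F is irreducible in k[X,Y], but its image under the coefficient map to (AlgebraicClosure k)[X,Y] is not irreducible. Then the set of k-rational zeros {p : Fin 2 → k | eval p F = 0} is finite. -/

import Mathlib

open MvPolynomial
open scoped nonZeroDivisors

/-- Core elimination lemma over a UFD: if `g` is irreducible and doesn't divide `p`,
then the ideal `(g, p)` contains a nonzero constant. -/
lemma core_elim {R : Type*} [CommRing R] [IsDomain R] [UniqueFactorizationMonoid R]
    {g p : Polynomial R} (hg : Irreducible g) (h : ¬ g ∣ p) :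
    ∃ u : R, u ≠ 0 ∧ Polynomial.C u ∈ Ideal.span {g, p} := by
  classical
  have hg0 : g ≠ 0 := hg.ne_zero
  rcases eq_or_ne g.natDegree 0 with hdeg | hdeg
  · obtain ⟨c, hc⟩ := Polynomial.natDegree_eq_zero.mp hdeg
    refine ⟨c, fun h0 => hg0 (by rw [← hc, h0, map_zero]), ?_⟩
    rw [hc]
    exact Ideal.subset_span (Set.mem_insert _ _)
  · letI : NormalizationMonoid R :=
        UniqueFactorizationMonoid.normalizationMonoid.toNormalizationMonoid
    letI : NormalizedGCDMonoid R := UniqueFactorizationMonoid.toNormalizedGCDMonoid R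
    set K := FractionRing R
    have hprim : g.IsPrimitive := by
      intro r hr
      obtain ⟨t, ht⟩ := hr
      rcases hg.isUnit_or_isUnit ht with h1 | h2
      · exact Polynomial.isUnit_C.mp h1
      · exfalso
        apply hdeg
        have h3 := Polynomial.natDegree_mul_le (p := Polynomial.C r) (q := t)
        have h4 : t.natDegree = 0 := Polynomial.natDegree_eq_zero_of_isUnit h2
        rw [ht]
        simp only [Polynomial.natDegree_C, h4, add_zero, zero_add] at h3 ⊢
        omega
    have hgF : Irreducible (g.map (algebraMap R K)) :=
      (hprim.irreducible_iff_irreducible_map_fraction_map (K := K)).mp hg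
    have hnd : ¬ g.map (algebraMap R K) ∣ p.map (algebraMap R K) := by
      intro hd
      apply h
      have hpne : p ≠ 0 := by rintro rfl; exact h (dvd_zero g)
      have hcont : p.content ≠ 0 := by rwa [Ne, Polynomial.content_eq_zero_iff]
      have hunit : IsUnit (Polynomial.C (algebraMap R K p.content)) := by
        apply Polynomial.isUnit_C.mpr
        exact isUnit_iff_ne_zero.mpr fun h0 => hcont
          ((injective_iff_map_eq_zero _).mp (IsFractionRing.injective R K) _ h0)
      have hd2 : g.map (algebraMap R K) ∣ p.primPart.map (algebraMap R K) := by
        have hsplit : p.map (algebraMap R K) =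
            Polynomial.C (algebraMap R K p.content) * p.primPart.map (algebraMap R K) := by
          conv_lhs => rw [p.eq_C_content_mul_primPart]
          rw [Polynomial.map_mul, Polynomial.map_C]
        rw [hsplit] at hd
        exact (IsUnit.dvd_mul_left hunit).mp hd
      have hdp : g ∣ p.primPart :=
        hprim.dvd_of_fraction_map_dvd_fraction_map hd2
      exact hdp.trans p.primPart_dvd
    have hcop : IsCoprime (g.map (algebraMap R K)) (p.map (algebraMap R K)) :=
      hgF.coprime_iff_not_dvd.mpr hnd
    obtain ⟨A, B, hAB⟩ := hcop
    obtain ⟨dA, hdA⟩ := IsLocalization.integerNormalization_map_to_map R⁰ A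
    obtain ⟨dB, hdB⟩ := IsLocalization.integerNormalization_map_to_map R⁰ B
    have hdA0 : (dA : R) ≠ 0 := nonZeroDivisors.coe_ne_zero dA
    have hdB0 : (dB : R) ≠ 0 := nonZeroDivisors.coe_ne_zero dB
    refine ⟨dA * dB, mul_ne_zero hdA0 hdB0, ?_⟩
    rw [Ideal.mem_span_pair]
    refine ⟨Polynomial.C (dB : R) * IsLocalization.integerNormalization R⁰ A,
            Polynomial.C (dA : R) * IsLocalization.integerNormalization R⁰ B, ?_⟩
    apply Polynomial.map_injective (algebraMap R K) (IsFractionRing.injective R K)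
    rw [Polynomial.map_add, Polynomial.map_mul, Polynomial.map_mul, Polynomial.map_mul,
      Polynomial.map_mul, Polynomial.map_C, Polynomial.map_C, Polynomial.map_C, hdA, hdB]
    have hsm : ∀ (d : R) (q : Polynomial K), d • q = Polynomial.C (algebraMap R K d) * q := by
      intro d q
      rw [← algebraMap_smul K d q, Polynomial.smul_eq_C_mul]
    rw [hsm, hsm, map_mul, Polynomial.C_mul]
    linear_combination (Polynomial.C (algebraMap R K (dA : R)) *
      Polynomial.C (algebraMap R K (dB : R))) * hAB

lemma finSuccEquiv_rename_succ {E : Type*} [Field E] (u : MvPolynomial (Fin 1) E) :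
    finSuccEquiv E 1 (rename Fin.succ u) = Polynomial.C u := by
  induction u using MvPolynomial.induction_on with
  | C a => simp [finSuccEquiv_apply]
  | add p q hp hq => rw [map_add, map_add, hp, hq, map_add]
  | mul_X p i hp =>
      have hi : i = 0 := Subsingleton.elim i 0
      subst hi
      rw [map_mul, rename_X, map_mul, hp, finSuccEquiv_X_succ, map_mul]

lemma mv_elim {E : Type*} [Field E] {G P : MvPolynomial (Fin 2) E}
    (hG : Irreducible G) (h : ¬ G ∣ P) :
    ∃ u : MvPolynomial (Fin 1) E, u ≠ 0 ∧ rename Fin.succ u ∈ Ideal.span {G, P} := by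
  have hg : Irreducible (finSuccEquiv E 1 G) :=
    (MulEquiv.irreducible_iff (finSuccEquiv E 1).toMulEquiv).mpr hG
  have hdvd : ¬ finSuccEquiv E 1 G ∣ finSuccEquiv E 1 P := by
    rintro ⟨t, ht⟩
    apply h
    refine ⟨(finSuccEquiv E 1).symm t, ?_⟩
    apply (finSuccEquiv E 1).injective
    rw [map_mul, ht, AlgEquiv.apply_symm_apply]
  obtain ⟨u, hu0, hu⟩ := core_elim hg hdvd
  refine ⟨u, hu0, ?_⟩
  rw [Ideal.mem_span_pair] at hu ⊢
  obtain ⟨A, B, hAB⟩ := hu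
  refine ⟨(finSuccEquiv E 1).symm A, (finSuccEquiv E 1).symm B, ?_⟩
  apply (finSuccEquiv E 1).injective
  rw [map_add, map_mul, map_mul, AlgEquiv.apply_symm_apply, AlgEquiv.apply_symm_apply,
    finSuccEquiv_rename_succ, hAB]

lemma fin1_finite {E : Type*} [Field E] {u : MvPolynomial (Fin 1) E} (hu : u ≠ 0) :
    {x : E | eval (fun _ => x) u = 0}.Finite := by
  classical
  have h1 : (finSuccEquiv E 0) u ≠ 0 := by
    intro h0
    apply hu
    apply_fun (finSuccEquiv E 0).symm at h0
    simpa using h0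
  have hinj : Function.Injective (eval (fun i : Fin 0 => i.elim0) :
      MvPolynomial (Fin 0) E →+* E) := by
    intro a b hab
    rw [eq_C_of_isEmpty a, eq_C_of_isEmpty b]
    have : eval (fun i : Fin 0 => i.elim0) (C (coeff 0 a) : MvPolynomial (Fin 0) E)
        = eval (fun i : Fin 0 => i.elim0) (C (coeff 0 b) : MvPolynomial (Fin 0) E) := by
      rw [← eq_C_of_isEmpty a, ← eq_C_of_isEmpty b]; exact hab
    rw [eval_C, eval_C] at this
    rw [this]
  have hq : Polynomial.map (eval (fun i : Fin 0 => i.elim0)) ((finSuccEquiv E 0) u) ≠ 0 := by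
    rw [Ne, Polynomial.map_eq_zero_iff hinj]
    exact h1
  apply (Polynomial.finite_setOf_isRoot hq).subset
  intro x hx
  simp only [Set.mem_setOf_eq] at hx ⊢
  have hfun : (fun _ : Fin 1 => x) = Fin.cons x (fun i : Fin 0 => i.elim0) := by
    funext i
    have h0 : i = 0 := Subsingleton.elim i 0
    subst h0
    simp
  rw [hfun, eval_eq_eval_mv_eval'] at hx
  exact hx

lemma degreeOf_zero_of_dvd_rename {E : Type*} [Field E] {G : MvPolynomial (Fin 2) E}
    {u : MvPolynomial (Fin 1) E} (hu : u ≠ 0) (h : G ∣ rename Fin.succ u) :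
    degreeOf 0 G = 0 := by
  obtain ⟨t, ht⟩ := h
  have hCu : Polynomial.C u = finSuccEquiv E 1 G * finSuccEquiv E 1 t := by
    rw [← finSuccEquiv_rename_succ, ht, map_mul]
  have hG0 : (finSuccEquiv E 1) G ≠ 0 := by
    intro h0
    rw [h0, zero_mul] at hCu
    exact hu (by simpa using hCu)
  have ht0 : (finSuccEquiv E 1) t ≠ 0 := by
    intro h0
    rw [h0, mul_zero] at hCu
    exact hu (by simpa using hCu)
  have hnd := Polynomial.natDegree_mul hG0 ht0
  rw [← hCu, Polynomial.natDegree_C] at hnd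
  have h2 : ((finSuccEquiv E 1) G).natDegree = 0 := by omega
  rwa [natDegree_finSuccEquiv] at h2

lemma eq_C_of_degreeOf_eq_zero {E : Type*} [Field E] {G : MvPolynomial (Fin 2) E}
    (h0 : degreeOf 0 G = 0) (h1 : degreeOf 1 G = 0) : ∃ c, G = C c := by
  refine ⟨coeff 0 G, ?_⟩
  ext m
  rw [coeff_C]
  split_ifs with hm
  · rw [← hm]
  · by_contra hc
    have hmem : m ∈ G.support := mem_support_iff.mpr hc
    have key : ∀ i : Fin 2, m i = 0 := by
      rw [Fin.forall_fin_two]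
      constructor
      · have hle : m 0 ≤ degreeOf 0 G := by
          rw [degreeOf_eq_sup]; exact Finset.le_sup (f := fun m => m 0) hmem
        omega
      · have hle : m 1 ≤ degreeOf 1 G := by
          rw [degreeOf_eq_sup]; exact Finset.le_sup (f := fun m => m 1) hmem
        omega
    apply hm
    ext i
    simp [key i]

lemma unit2 {E : Type*} [Field E] {u : MvPolynomial (Fin 2) E} (hu : IsUnit u) :
    ∃ c, u = C c := by
  have hCn : ∀ (n : ℕ) (a : E),
      MvPolynomial.finSuccEquiv E n (C a : MvPolynomial (Fin (n+1)) E)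
        = Polynomial.C (C a : MvPolynomial (Fin n) E) := by
    intro n a
    simp [finSuccEquiv_apply]
  have h1 : IsUnit ((finSuccEquiv E 1) u) := hu.map _
  obtain ⟨r, hr, hru⟩ := Polynomial.isUnit_iff.mp h1
  have h2 : IsUnit ((finSuccEquiv E 0) r) := hr.map _
  obtain ⟨s, hs, hsr⟩ := Polynomial.isUnit_iff.mp h2
  set a := coeff 0 s with ha
  have hsa : s = C a := eq_C_of_isEmpty s
  have hra : r = C a := by
    apply (finSuccEquiv E 0).injective
    rw [hCn 0 a, ← hsa, hsr]
  refine ⟨a, ?_⟩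
  apply (finSuccEquiv E 1).injective
  rw [hCn 1 a, ← hra, hru]

lemma exists_preimage {k K : Type*} [Field k] [Field K] {ι : k →+* K}
    {G : MvPolynomial (Fin 2) K} (h : ∀ m, coeff m G ∈ Set.range ι) :
    ∃ G₀ : MvPolynomial (Fin 2) k, map ι G₀ = G := by
  classical
  choose c hc using h
  refine ⟨∑ m ∈ G.support, monomial m (c m), ?_⟩
  ext m
  rw [coeff_map]
  have hco : coeff m (∑ m' ∈ G.support, monomial m' (c m')) =
      if m ∈ G.support then c m else 0 := by
    rw [coeff_sum]
    simp only [coeff_monomial]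
    rw [Finset.sum_ite_eq' G.support m c]
  rw [hco]
  split_ifs with hmem
  · exact hc m
  · rw [map_zero]
    exact (notMem_support_iff.mp hmem).symm

lemma fixed_mem_range {k : Type*} [Field k] [CharZero k]
    {x : AlgebraicClosure k}
    (hx : ∀ σ : AlgebraicClosure k →ₐ[k] AlgebraicClosure k, σ x = x) :
    x ∈ Set.range (algebraMap k (AlgebraicClosure k)) := by
  have hint : IsIntegral k x := Algebra.IsIntegral.isIntegral x
  have hirr := minpoly.irreducible hint
  have hsep : (minpoly k x).Separable := hirr.separable
  have hsplit : ((minpoly k x).map (algebraMap k (AlgebraicClosure k))).Splits :=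
    IsAlgClosed.splits _
  have hroots := Algebra.IsAlgebraic.range_eval_eq_rootSet_minpoly_of_splits (F := k)
      (K := AlgebraicClosure k) (AlgebraicClosure k)
      (fun y => IsAlgClosed.splits _) x
  have hx_mem : x ∈ (minpoly k x).rootSet (AlgebraicClosure k) := by
    rw [Polynomial.mem_rootSet]
    exact ⟨minpoly.ne_zero hint, minpoly.aeval k x⟩
  have hsub : (minpoly k x).rootSet (AlgebraicClosure k) = {x} := by
    apply Set.eq_singleton_iff_unique_mem.mpr
    refine ⟨hx_mem, fun y hy => ?_⟩
    rw [← hroots] at hy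
    obtain ⟨σ, rfl⟩ := hy
    exact hx σ
  have hcard : Fintype.card ((minpoly k x).rootSet (AlgebraicClosure k)) = (minpoly k x).natDegree :=
    Polynomial.card_rootSet_eq_natDegree hsep hsplit
  have hone : (minpoly k x).natDegree = 1 := by
    rw [← hcard, Fintype.card_congr (Equiv.setCongr hsub), Set.card_singleton]
  have hmem := minpoly.natDegree_eq_one_iff.mp hone
  obtain ⟨c, hc⟩ := hmem
  exact ⟨c, hc⟩

section Helpers

variable {E : Type*} [Field E]

lemma swap_swap_fun : ∀ i : Fin 2, Equiv.swap (0:Fin 2) 1 (Equiv.swap (0:Fin 2) 1 i) = i :=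
  fun i => Equiv.swap_apply_self _ _ i

lemma rename_swap_swap (p : MvPolynomial (Fin 2) E) :
    rename (Equiv.swap (0:Fin 2) 1) (rename (Equiv.swap (0:Fin 2) 1) p) = p := by
  rw [rename_rename]
  have h : (Equiv.swap (0:Fin 2) 1) ∘ (Equiv.swap (0:Fin 2) 1) = id := by
    funext i; exact swap_swap_fun i
  rw [h, rename_id, AlgHom.id_apply]

lemma irreducible_rename_swap {p : MvPolynomial (Fin 2) E} (hp : Irreducible p) :
    Irreducible (rename (Equiv.swap (0:Fin 2) 1) p) := by
  have h := (MulEquiv.irreducible_iff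
    (renameEquiv E (Equiv.swap (0:Fin 2) 1)).toMulEquiv).mpr hp
  simpa using h

lemma dvd_rename_swap {p q : MvPolynomial (Fin 2) E} (h : p ∣ q) :
    rename (Equiv.swap (0:Fin 2) 1) p ∣ rename (Equiv.swap (0:Fin 2) 1) q := by
  obtain ⟨t, rfl⟩ := h
  exact ⟨rename (Equiv.swap (0:Fin 2) 1) t, by rw [map_mul]⟩

lemma not_dvd_rename_swap {p q : MvPolynomial (Fin 2) E} (h : ¬ p ∣ q) :
    ¬ rename (Equiv.swap (0:Fin 2) 1) p ∣ rename (Equiv.swap (0:Fin 2) 1) q := by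
  intro hd
  apply h
  have := dvd_rename_swap hd
  rwa [rename_swap_swap, rename_swap_swap] at this

end Helpers

lemma factor_finite_aux {k : Type*} [Field k] [NumberField k]
    {F : MvPolynomial (Fin 2) k} (hF : Irreducible F)
    (hgeo : ¬ Irreducible (MvPolynomial.map (algebraMap k (AlgebraicClosure k)) F))
    {G : MvPolynomial (Fin 2) (AlgebraicClosure k)} (hG : Irreducible G)
    (hGF : G ∣ MvPolynomial.map (algebraMap k (AlgebraicClosure k)) F)
    {m₀ : Fin 2 →₀ ℕ} (hone : coeff m₀ G = 1) :
    {p : Fin 2 → k |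
      eval (fun i => algebraMap k (AlgebraicClosure k) (p i)) G = 0}.Finite := by
  classical
  have hιinj : Function.Injective (algebraMap k (AlgebraicClosure k)) :=
    (algebraMap k (AlgebraicClosure k)).injective
  by_cases hcase : ∀ σ : AlgebraicClosure k →ₐ[k] AlgebraicClosure k,
      G ∣ MvPolynomial.map σ.toRingHom G
  · exfalso
    -- every coefficient of G is fixed by the Galois action
    have hfix : ∀ σ : AlgebraicClosure k →ₐ[k] AlgebraicClosure k,
        MvPolynomial.map σ.toRingHom G = G := by
      intro σ
      have hbij : Function.Bijective σ := Algebra.IsAlgebraic.algHom_bijective σ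
      let eσ : AlgebraicClosure k ≃ₐ[k] AlgebraicClosure k := AlgEquiv.ofBijective σ hbij
      have hcomp : σ.toRingHom.comp ((eσ.symm : AlgebraicClosure k →ₐ[k]
          AlgebraicClosure k).toRingHom) = RingHom.id _ := by
        ext y
        exact eσ.apply_symm_apply y
      have h2 : MvPolynomial.map σ.toRingHom G ∣ G := by
        obtain ⟨t, ht⟩ := hcase (eσ.symm : AlgebraicClosure k →ₐ[k] AlgebraicClosure k)
        refine ⟨MvPolynomial.map σ.toRingHom t, ?_⟩
        have hGid : MvPolynomial.map σ.toRingHom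
            (MvPolynomial.map ((eσ.symm : AlgebraicClosure k →ₐ[k]
              AlgebraicClosure k).toRingHom) G) = G := by
          rw [MvPolynomial.map_map, hcomp, MvPolynomial.map_id]
        conv_lhs => rw [← hGid, ht, map_mul]
      have hassoc : Associated G (MvPolynomial.map σ.toRingHom G) :=
        associated_of_dvd_dvd (hcase σ) h2
      obtain ⟨t, ht⟩ := hassoc
      obtain ⟨c, hc⟩ := unit2 t.isUnit
      have hc1 : c = 1 := by
        have hcoe := congrArg (coeff m₀) ht
        rw [hc, mul_comm, coeff_C_mul, hone, mul_one, coeff_map, hone, map_one] at hcoe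
        exact hcoe
      rw [← ht, hc, hc1, C_1, mul_one]
    have hcoef : ∀ m, coeff m G ∈ Set.range (algebraMap k (AlgebraicClosure k)) := by
      intro m
      apply fixed_mem_range
      intro σ
      have h3 := congrArg (coeff m) (hfix σ)
      rwa [coeff_map] at h3
    obtain ⟨G₀, hG₀⟩ := exists_preimage hcoef
    have hG₀0 : G₀ ≠ 0 := by
      rintro rfl
      rw [map_zero] at hG₀
      exact hG.ne_zero hG₀.symm
    -- show F divides G₀
    have hFG₀ : F ∣ G₀ := by
      by_contra hnot
      obtain ⟨u, hu0, huspan⟩ := mv_elim hF hnot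
      obtain ⟨v, hv0, hvspan⟩ := mv_elim (irreducible_rename_swap hF) (not_dvd_rename_swap hnot)
      have hGspan : ∀ s ∈ Ideal.span ({F, G₀} : Set (MvPolynomial (Fin 2) k)),
          G ∣ MvPolynomial.map (algebraMap k (AlgebraicClosure k)) s := by
        intro s hs
        rw [Ideal.mem_span_pair] at hs
        obtain ⟨A, B, rfl⟩ := hs
        rw [map_add, map_mul, map_mul, hG₀]
        exact dvd_add (hGF.mul_left _) (Dvd.intro_left _ rfl)
      -- first coordinate degree
      have hu0' : MvPolynomial.map (algebraMap k (AlgebraicClosure k)) u ≠ 0 := by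
        intro h0
        exact hu0 (MvPolynomial.map_injective _ hιinj (by rwa [map_zero]))
      have h1 : G ∣ rename Fin.succ (MvPolynomial.map (algebraMap k (AlgebraicClosure k)) u) := by
        have := hGspan _ huspan
        rwa [MvPolynomial.map_rename] at this
      have hd0 : degreeOf 0 G = 0 := degreeOf_zero_of_dvd_rename hu0' h1
      -- second coordinate degree
      have hv0' : MvPolynomial.map (algebraMap k (AlgebraicClosure k)) v ≠ 0 := by
        intro h0
        exact hv0 (MvPolynomial.map_injective _ hιinj (by rwa [map_zero]))
      have hvmem : rename (Equiv.swap (0:Fin 2) 1) (rename Fin.succ v) ∈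
          Ideal.span ({F, G₀} : Set (MvPolynomial (Fin 2) k)) := by
        rw [Ideal.mem_span_pair] at hvspan ⊢
        obtain ⟨A, B, hAB⟩ := hvspan
        refine ⟨rename (Equiv.swap (0:Fin 2) 1) A, rename (Equiv.swap (0:Fin 2) 1) B, ?_⟩
        have := congrArg (rename (Equiv.swap (0:Fin 2) 1)) hAB
        rw [map_add, map_mul, map_mul, rename_swap_swap, rename_swap_swap] at this
        exact this
      have h2 : G ∣ rename (Equiv.swap (0:Fin 2) 1)
          (rename Fin.succ (MvPolynomial.map (algebraMap k (AlgebraicClosure k)) v)) := by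
        have := hGspan _ hvmem
        rwa [MvPolynomial.map_rename, MvPolynomial.map_rename] at this
      have h3 : rename (Equiv.swap (0:Fin 2) 1) G ∣
          rename Fin.succ (MvPolynomial.map (algebraMap k (AlgebraicClosure k)) v) := by
        have := dvd_rename_swap h2
        rwa [rename_swap_swap] at this
      have hd1' : degreeOf 0 (rename (Equiv.swap (0:Fin 2) 1) G) = 0 :=
        degreeOf_zero_of_dvd_rename hv0' h3
      have hd1 : degreeOf 1 G = 0 := by
        have := degreeOf_rename_of_injective
          (Equiv.injective (Equiv.swap (0:Fin 2) 1)) (i := 1) (p := G)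
        rw [Equiv.swap_apply_right] at this
        rw [← this]
        exact hd1'
      obtain ⟨c, hc⟩ := eq_C_of_degreeOf_eq_zero hd0 hd1
      have hc0 : c ≠ 0 := by
        rintro rfl
        rw [map_zero] at hc
        exact hG.ne_zero hc
      exact hG.not_isUnit (hc ▸ (isUnit_iff_ne_zero.mpr hc0).map
        (C : AlgebraicClosure k →+* MvPolynomial (Fin 2) (AlgebraicClosure k)))
    -- conclude geometric irreducibility, contradiction
    obtain ⟨Rq, hRq⟩ := hFG₀
    have hfdvd : MvPolynomial.map (algebraMap k (AlgebraicClosure k)) F ∣ G := by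
      refine ⟨MvPolynomial.map (algebraMap k (AlgebraicClosure k)) Rq, ?_⟩
      rw [← hG₀, hRq, map_mul]
    exact hgeo ((associated_of_dvd_dvd hGF hfdvd).irreducible hG)
  · -- some conjugate of G is coprime to G
    push_neg at hcase
    obtain ⟨σ, hσ⟩ := hcase
    obtain ⟨u, hu0, huspan⟩ := mv_elim hG hσ
    obtain ⟨v, hv0, hvspan⟩ := mv_elim (irreducible_rename_swap hG) (not_dvd_rename_swap hσ)
    have hA1 : ((fun a : k => algebraMap k (AlgebraicClosure k) a) ⁻¹'
        {a | eval (fun _ => a) u = 0}).Finite :=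
      (fin1_finite hu0).preimage hιinj.injOn
    have hA0 : ((fun a : k => algebraMap k (AlgebraicClosure k) a) ⁻¹'
        {a | eval (fun _ => a) v = 0}).Finite :=
      (fin1_finite hv0).preimage hιinj.injOn
    have hfin : ((fun p : Fin 2 → k => (p 0, p 1)) ⁻¹'
        (((fun a : k => algebraMap k (AlgebraicClosure k) a) ⁻¹'
          {a | eval (fun _ => a) v = 0}) ×ˢ
         ((fun a : k => algebraMap k (AlgebraicClosure k) a) ⁻¹'
          {a | eval (fun _ => a) u = 0}))).Finite := by
      apply Set.Finite.preimage ?_ (hA0.prod hA1)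
      intro p _ q _ hpq
      funext i
      fin_cases i
      · exact congrArg Prod.fst hpq
      · exact congrArg Prod.snd hpq
    apply hfin.subset
    intro p hp
    simp only [Set.mem_setOf_eq] at hp
    have hPz : eval (fun i => algebraMap k (AlgebraicClosure k) (p i))
        (MvPolynomial.map σ.toRingHom G) = 0 := by
      rw [eval_map]
      have hcl := eval₂_comp_left σ.toRingHom (RingHom.id _)
        (fun i => algebraMap k (AlgebraicClosure k) (p i)) G
      rw [RingHom.comp_id] at hcl
      have h4 : eval₂ (RingHom.id _) (fun i => algebraMap k (AlgebraicClosure k) (p i)) G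
          = eval (fun i => algebraMap k (AlgebraicClosure k) (p i)) G := rfl
      rw [h4, hp, map_zero] at hcl
      have hfun : (⇑σ.toRingHom ∘ fun i => algebraMap k (AlgebraicClosure k) (p i))
          = fun i => algebraMap k (AlgebraicClosure k) (p i) := by
        funext i
        exact σ.commutes (p i)
      rw [hfun] at hcl
      exact hcl.symm
    -- evaluation of span elements vanishes
    have hev : ∀ s ∈ Ideal.span ({G, MvPolynomial.map σ.toRingHom G} :
        Set (MvPolynomial (Fin 2) (AlgebraicClosure k))),
        eval (fun i => algebraMap k (AlgebraicClosure k) (p i)) s = 0 := by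
      intro s hs
      rw [Ideal.mem_span_pair] at hs
      obtain ⟨A, B, rfl⟩ := hs
      rw [map_add, map_mul, map_mul, hp, hPz, mul_zero, mul_zero, add_zero]
    constructor
    · -- p 0 constraint from v
      have hz := hev _ (by
        rw [Ideal.mem_span_pair] at hvspan ⊢
        obtain ⟨A, B, hAB⟩ := hvspan
        refine ⟨rename (Equiv.swap (0:Fin 2) 1) A, rename (Equiv.swap (0:Fin 2) 1) B, ?_⟩
        have := congrArg (rename (Equiv.swap (0:Fin 2) 1)) hAB
        rw [map_add, map_mul, map_mul, rename_swap_swap, rename_swap_swap] at this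
        exact this)
      rw [rename_rename, eval_rename] at hz
      have hfun : ((fun i => algebraMap k (AlgebraicClosure k) (p i)) ∘
          ((Equiv.swap (0:Fin 2) 1) ∘ Fin.succ)) = fun _ : Fin 1 =>
            algebraMap k (AlgebraicClosure k) (p 0) := by
        funext i
        have hi : i = 0 := Subsingleton.elim i 0
        subst hi
        simp [Equiv.swap_apply_right]
      rw [hfun] at hz
      exact hz
    · -- p 1 constraint from u
      have hz := hev _ huspan
      rw [eval_rename] at hz
      have hfun : ((fun i => algebraMap k (AlgebraicClosure k) (p i)) ∘ Fin.succ)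
          = fun _ : Fin 1 => algebraMap k (AlgebraicClosure k) (p 1) := by
        funext i
        have hi : i = 0 := Subsingleton.elim i 0
        subst hi
        rfl
      rw [hfun] at hz
      exact hz

lemma factor_finite {k : Type*} [Field k] [NumberField k]
    {F : MvPolynomial (Fin 2) k} (hF : Irreducible F)
    (hgeo : ¬ Irreducible (MvPolynomial.map (algebraMap k (AlgebraicClosure k)) F))
    {G : MvPolynomial (Fin 2) (AlgebraicClosure k)} (hG : Irreducible G)
    (hGF : G ∣ MvPolynomial.map (algebraMap k (AlgebraicClosure k)) F) :
    {p : Fin 2 → k |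
      eval (fun i => algebraMap k (AlgebraicClosure k) (p i)) G = 0}.Finite := by
  classical
  have hG0 : G ≠ 0 := hG.ne_zero
  obtain ⟨m₀, hm₀⟩ := support_nonempty.mpr hG0
  have hc0 : coeff m₀ G ≠ 0 := mem_support_iff.mp hm₀
  have hunit : IsUnit (C (coeff m₀ G)⁻¹ : MvPolynomial (Fin 2) (AlgebraicClosure k)) :=
    (isUnit_iff_ne_zero.mpr (inv_ne_zero hc0)).map
      (C : AlgebraicClosure k →+* MvPolynomial (Fin 2) (AlgebraicClosure k))
  have hGassoc : Associated G (C (coeff m₀ G)⁻¹ * G) :=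
    ⟨hunit.unit, by rw [IsUnit.unit_spec, mul_comm]⟩
  have hG'irr : Irreducible (C (coeff m₀ G)⁻¹ * G) := hGassoc.irreducible hG
  have hG'F : C (coeff m₀ G)⁻¹ * G ∣ MvPolynomial.map (algebraMap k (AlgebraicClosure k)) F :=
    hGassoc.symm.dvd.trans hGF
  have hone : coeff m₀ (C (coeff m₀ G)⁻¹ * G) = 1 := by
    rw [coeff_C_mul, inv_mul_cancel₀ hc0]
  apply (factor_finite_aux hF hgeo hG'irr hG'F hone).subset
  intro p hp
  simp only [Set.mem_setOf_eq] at hp ⊢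
  rw [map_mul, eval_C, hp, mul_zero]

theorem stmt_15 (k : Type*) [Field k] [NumberField k]
    (F : MvPolynomial (Fin 2) k) (hF : Irreducible F)
    (hgeo : ¬ Irreducible (MvPolynomial.map (algebraMap k (AlgebraicClosure k)) F)) :
    {p : Fin 2 → k | MvPolynomial.eval p F = 0}.Finite := by
  classical
  have hιinj : Function.Injective (algebraMap k (AlgebraicClosure k)) :=
    (algebraMap k (AlgebraicClosure k)).injective
  have hf0 : MvPolynomial.map (algebraMap k (AlgebraicClosure k)) F ≠ 0 := by
    intro h0
    exact hF.ne_zero (MvPolynomial.map_injective _ hιinj (by rwa [map_zero]))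
  have hcover : {p : Fin 2 → k | MvPolynomial.eval p F = 0} ⊆
      ⋃ G ∈ ((UniqueFactorizationMonoid.factors
          (MvPolynomial.map (algebraMap k (AlgebraicClosure k)) F)).toFinset :
            Finset (MvPolynomial (Fin 2) (AlgebraicClosure k))),
        {p : Fin 2 → k | eval (fun i => algebraMap k (AlgebraicClosure k) (p i)) G = 0} := by
    intro p hp
    simp only [Set.mem_setOf_eq] at hp
    have hev : eval (fun i => algebraMap k (AlgebraicClosure k) (p i))
        (MvPolynomial.map (algebraMap k (AlgebraicClosure k)) F) = 0 := by
      rw [eval_map]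
      have hcl := eval₂_comp_left (algebraMap k (AlgebraicClosure k)) (RingHom.id k) p F
      rw [RingHom.comp_id] at hcl
      have h4 : eval₂ (RingHom.id k) p F = eval p F := rfl
      rw [h4, hp, map_zero] at hcl
      exact hcl.symm
    obtain ⟨un, hun⟩ := UniqueFactorizationMonoid.factors_prod hf0
    rw [← hun, map_mul] at hev
    have hu_ne : eval (fun i => algebraMap k (AlgebraicClosure k) (p i))
        (un : MvPolynomial (Fin 2) (AlgebraicClosure k)) ≠ 0 :=
      (un.isUnit.map (eval (fun i => algebraMap k (AlgebraicClosure k) (p i)))).ne_zero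
    have hprod0 : eval (fun i => algebraMap k (AlgebraicClosure k) (p i))
        (UniqueFactorizationMonoid.factors
          (MvPolynomial.map (algebraMap k (AlgebraicClosure k)) F)).prod = 0 := by
      rcases mul_eq_zero.mp hev with h | h
      · exact h
      · exact absurd h hu_ne
    rw [map_multiset_prod] at hprod0
    rw [Multiset.prod_eq_zero_iff] at hprod0
    rw [Multiset.mem_map] at hprod0
    obtain ⟨G, hGmem, hGz⟩ := hprod0
    exact Set.mem_biUnion (Finset.mem_coe.mpr (Multiset.mem_toFinset.mpr hGmem)) hGz
  apply Set.Finite.subset ?_ hcover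
  apply Set.Finite.biUnion ((UniqueFactorizationMonoid.factors
      (MvPolynomial.map (algebraMap k (AlgebraicClosure k)) F)).toFinset.finite_toSet)
  intro G hGmem
  have hGmem' := Multiset.mem_toFinset.mp (Finset.mem_coe.mp hGmem)
  exact factor_finite hF hgeo
    (UniqueFactorizationMonoid.irreducible_of_factor G hGmem')
    (UniqueFactorizationMonoid.dvd_of_mem_factors hGmem')
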